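/- Every nonzero F_{q^N}-linear combination of rows of the Moore matrix G_k (with g_1,...,g_n linearly independent over F_q, n ≤ N, k < n) is a vector whose coordinates span an F_q-subspace of dimension at least n − k + 1. -/

import Mathlib

/-- Rank norm of a vector over the base field `K`. -/
noncomputable def rankNorm (K : Type*) {L : Type*} [Field K] [Field L] [Algebra K L]
    {n : ℕ} (x : Fin n → L) : ℕ :=
  Module.finrank K (Submodule.span K (Set.range x))

/-- every nonzero `F_{q^N}`-linear combination of rows of the Moore matrix
spans an `F_q`-subspace of dimension at least `n − k + 1`. -/
theorem moore_combination_rank_ge (K L : Type*) [Field K] [Fintype K] [Field L] [Fintype L]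
    [Algebra K L] (n k : ℕ) (hn : n ≤ Module.finrank K L) (hkn : k < n)
    (g : Fin n → L) (hg : LinearIndependent K g)
    (a : Fin k → L) (ha : a ≠ 0) :
    n - k + 1 ≤ rankNorm K (fun (j : Fin n) => ∑ i : Fin k, a i * g j ^ (Fintype.card K) ^ (i : ℕ)) := by
  classical
  rcases Nat.eq_zero_or_pos k with hk0 | hk1
  · subst hk0; exact absurd (funext fun i => i.elim0) ha
  set q := Fintype.card K with hq
  have hq1 : 1 < q := Fintype.one_lt_card
  set p := ringChar K with hp
  haveI : CharP K p := ringChar.charP K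
  obtain ⟨m, hpprime, hcard⟩ := FiniteField.card K p
  haveI : Fact p.Prime := ⟨hpprime⟩
  haveI : CharP L p := charP_of_injective_algebraMap (algebraMap K L).injective p
  -- the linearized polynomial as a K-linear map
  have hadd : ∀ x y : L, ∀ i : ℕ, (x + y) ^ q ^ i = x ^ q ^ i + y ^ q ^ i := by
    intro x y i
    have hqp : q = p ^ (m : ℕ) := hcard
    rw [hqp, ← pow_mul, add_pow_char_pow]
  let φ : L →ₗ[K] L :=
    { toFun := fun x => ∑ i : Fin k, a i * x ^ q ^ (i : ℕ)
      map_add' := by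
        intro x y
        rw [← Finset.sum_add_distrib]
        refine Finset.sum_congr rfl fun i _ => ?_
        rw [hadd, mul_add]
      map_smul' := by
        intro c x
        simp only [RingHom.id_apply, Finset.smul_sum, Algebra.smul_def, mul_pow]
        rw [Finset.mul_sum]
        refine Finset.sum_congr rfl fun i _ => ?_
        rw [← map_pow, FiniteField.pow_card_pow]
        ring }
  -- the polynomial
  let P : Polynomial L := ∑ i : Fin k, Polynomial.C (a i) * Polynomial.X ^ (q ^ (i : ℕ))
  obtain ⟨i0, hi0⟩ : ∃ i, a i ≠ 0 := by
    by_contra h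
    push_neg at h
    exact ha (funext h)
  have hinj : ∀ i j : Fin k, q ^ (i : ℕ) = q ^ (j : ℕ) → i = j := by
    intro i j hij
    exact Fin.ext (Nat.pow_right_injective hq1 hij)
  have hPcoeff : P.coeff (q ^ (i0 : ℕ)) = a i0 := by
    rw [Polynomial.finset_sum_coeff]
    rw [Finset.sum_eq_single i0]
    · simp
    · intro i _ hii
      rw [Polynomial.coeff_C_mul, Polynomial.coeff_X_pow, if_neg, mul_zero]
      exact fun h => hii (hinj i0 i h).symm
    · simp
  have hPne : P ≠ 0 := fun h => hi0 (by rw [← hPcoeff, h, Polynomial.coeff_zero])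
  have hPdeg : P.natDegree ≤ q ^ (k - 1) := by
    refine Polynomial.natDegree_sum_le_of_forall_le _ _ fun i _ => ?_
    refine le_trans (Polynomial.natDegree_C_mul_le _ _) ?_
    refine le_trans (Polynomial.natDegree_X_pow_le _) ?_
    exact Nat.pow_le_pow_right (by omega) (by omega)
  have hPeval : ∀ x : L, P.eval x = φ x := by
    intro x
    simp [P, φ, Polynomial.eval_finset_sum]
  -- kernel bound
  haveI : Fintype (LinearMap.ker φ) := Fintype.ofFinite _
  have hkercard : Fintype.card (LinearMap.ker φ) = q ^ Module.finrank K (LinearMap.ker φ) :=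
    Module.card_eq_pow_finrank
  have hkerle : Module.finrank K (LinearMap.ker φ) ≤ k - 1 := by
    have hsub : ((LinearMap.ker φ : Set L).toFinset).val ⊆ P.roots := by
      intro x hx
      simp only [Finset.mem_val, Set.mem_toFinset, SetLike.mem_coe, LinearMap.mem_ker] at hx
      rw [Polynomial.mem_roots']
      exact ⟨hPne, by rw [Polynomial.IsRoot, hPeval, hx]⟩
    have h1 : ((LinearMap.ker φ : Set L).toFinset).card ≤ P.natDegree :=
      Polynomial.card_le_degree_of_subset_roots hsub
    have h2 : Fintype.card (LinearMap.ker φ) = ((LinearMap.ker φ : Set L).toFinset).card := by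
      rw [Set.toFinset_card]; congr!
    rw [← Nat.pow_le_pow_iff_right hq1]
    calc q ^ Module.finrank K (LinearMap.ker φ) = Fintype.card (LinearMap.ker φ) := hkercard.symm
      _ = _ := h2
      _ ≤ P.natDegree := h1
      _ ≤ q ^ (k - 1) := hPdeg
  -- rank-nullity
  set V := Submodule.span K (Set.range g) with hV
  have hVrank : Module.finrank K V = n := by
    rw [hV, finrank_span_eq_card hg, Fintype.card_fin]
  let ψ := φ.domRestrict V
  have hrange : LinearMap.range ψ = Submodule.map φ V := LinearMap.range_domRestrict V φ
  have hrn : Module.finrank K (LinearMap.range ψ) + Module.finrank K (LinearMap.ker ψ) = n := by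
    rw [← hVrank]; exact LinearMap.finrank_range_add_finrank_ker ψ
  have hkerψ : Module.finrank K (LinearMap.ker ψ) ≤ k - 1 := by
    refine le_trans ?_ hkerle
    have : LinearMap.ker ψ = Submodule.comap V.subtype (LinearMap.ker φ) :=
      LinearMap.ker_domRestrict V φ
    rw [this]
    have hmap : Module.finrank K (Submodule.comap V.subtype (LinearMap.ker φ))
        = Module.finrank K (Submodule.map V.subtype (Submodule.comap V.subtype (LinearMap.ker φ))) :=
      (LinearEquiv.finrank_eq (Submodule.equivMapOfInjective V.subtype V.injective_subtype _))
    rw [hmap]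
    rw [Submodule.map_comap_subtype]
    exact Submodule.finrank_mono inf_le_right
  -- conclude
  have hspan : Submodule.span K (Set.range (fun (j : Fin n) =>
      ∑ i : Fin k, a i * g j ^ q ^ (i : ℕ))) = Submodule.map φ V := by
    rw [hV, Submodule.map_span, ← Set.range_comp]
    rfl
  rw [rankNorm, hspan, ← hrange]
  omega
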